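/- arXiv:1403.3391 — 2 statements merged into one kernel-verified Lean document; each statement's English description precedes it below -/
import Mathlib

section
/- Let A be a finite set of candidates with |A| ≥ 3 and let N = {1,…,n} be a finite set of voters. Every social welfare function F mapping profiles of linear orders over A to weak orders over A that satisfies Independence of Irrelevant Alternatives (IIA) and Non-Imposition (NI) is either null (at every profile, all candidates are socially indifferent), dictatorial, or anti-dictatorial. (Wilson's Theorem.) -/
/-- A voter preference: a strict linear (complete, transitive, antisymmetric) order on `A`. -/
abbrev Pref (A : Type*) := {r : A → A → Prop // IsStrictTotalOrder A r}

/-- A weak order: a complete, reflexive and transitive binary relation on `A`. -/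
abbrev WeakOrd (A : Type*) := {r : A → A → Prop // Reflexive r ∧ Transitive r ∧ Total r}

/-- The strict (asymmetric) part of a relation. -/
def StrictPart {A : Type*} (r : A → A → Prop) (a b : A) : Prop := r a b ∧ ¬ r b a

/-- Two relations agree on the pair `{a, b}`. -/
def AgreeOnPair {A : Type*} (r r' : A → A → Prop) (a b : A) : Prop :=
  (r a b ↔ r' a b) ∧ (r b a ↔ r' b a)

/-- Independence of Irrelevant Alternatives. -/
def IIA {A : Type*} {n : ℕ} (F : (Fin n → Pref A) → WeakOrd A) : Prop :=
  ∀ (P P' : Fin n → Pref A) (a b : A),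
    (∀ i, AgreeOnPair (P i).1 (P' i).1 a b) → AgreeOnPair (F P).1 (F P').1 a b

/-- Non-Imposition: every social ranking of a pair arises at some profile. -/
def NonImposition {A : Type*} {n : ℕ} (F : (Fin n → Pref A) → WeakOrd A) : Prop :=
  ∀ a b : A, ∃ P : Fin n → Pref A, (F P).1 a b

/-- Null rule: all candidates are socially indifferent at every profile. -/
def NullRule {A : Type*} {n : ℕ} (F : (Fin n → Pref A) → WeakOrd A) : Prop :=
  ∀ (P : Fin n → Pref A) (a b : A), (F P).1 a b ∧ (F P).1 b a

/-- Dictatorship: some voter's strict preferences are always reproduced socially. -/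
def Dictatorial {A : Type*} {n : ℕ} (F : (Fin n → Pref A) → WeakOrd A) : Prop :=
  ∃ i : Fin n, ∀ (P : Fin n → Pref A) (a b : A), (P i).1 a b → StrictPart (F P).1 a b

/-- Anti-dictatorship: some voter's strict preferences are always socially inverted. -/
def AntiDictatorial {A : Type*} {n : ℕ} (F : (Fin n → Pref A) → WeakOrd A) : Prop :=
  ∃ i : Fin n, ∀ (P : Fin n → Pref A) (a b : A), (P i).1 a b → StrictPart (F P).1 b a

namespace WilsonProof

variable {A : Type*} {n : ℕ}

lemma prefAsymm (p : Pref A) {a b : A} (h : p.1 a b) : ¬ p.1 b a := by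
  haveI := p.2
  intro h'
  exact absurd (_root_.trans_of p.1 h h') (irrefl_of p.1 a)

lemma prefNotIff (p : Pref A) {a b : A} (hab : a ≠ b) : ¬ p.1 a b ↔ p.1 b a := by
  haveI := p.2
  constructor
  · intro h
    rcases trichotomous_of p.1 a b with h' | h' | h'
    · exact absurd h' h
    · exact absurd h' hab
    · exact h'
  · exact fun h h' => prefAsymm p h' h

lemma prefNe (p : Pref A) {a b : A} (h : p.1 a b) : a ≠ b := by
  haveI := p.2
  rintro rfl; exact irrefl_of p.1 a h

lemma wtrans (w : WeakOrd A) {a b c : A} (h1 : w.1 a b) (h2 : w.1 b c) : w.1 a c :=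
  w.2.2.1 h1 h2

lemma sp_weak_trans (w : WeakOrd A) {a b c : A} (h1 : StrictPart w.1 a b) (h2 : w.1 b c) :
    StrictPart w.1 a c :=
  ⟨wtrans w h1.1 h2, fun h => h1.2 (wtrans w h2 h)⟩

lemma weak_sp_trans (w : WeakOrd A) {a b c : A} (h1 : w.1 a b) (h2 : StrictPart w.1 b c) :
    StrictPart w.1 a c :=
  ⟨wtrans w h1 h2.1, fun h => h2.2 (wtrans w h h1)⟩

lemma sp_trans (w : WeakOrd A) {a b c : A} (h1 : StrictPart w.1 a b) (h2 : StrictPart w.1 b c) :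
    StrictPart w.1 a c :=
  sp_weak_trans w h1 h2.1

lemma weak_of_not_sp (w : WeakOrd A) {a b : A} (h : ¬ StrictPart w.1 a b) : w.1 b a := by
  by_cases hb : w.1 b a
  · exact hb
  · rcases w.2.2.2 a b with h' | h'
    · exact absurd ⟨h', hb⟩ h
    · exact h'

lemma indiff_congr (w : WeakOrd A) {a b : A} (h1 : w.1 a b) (h2 : w.1 b a) (c : A) :
    (w.1 a c ↔ w.1 b c) ∧ (w.1 c a ↔ w.1 c b) :=
  ⟨⟨fun h => wtrans w h2 h, fun h => wtrans w h1 h⟩,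
   ⟨fun h => wtrans w h h1, fun h => wtrans w h h2⟩⟩

noncomputable def ofScore (f : A → ℕ) (hf : Function.Injective f) : Pref A :=
  ⟨fun x y => f y < f x,
   { trichotomous := fun x y => by
      rcases lt_trichotomy (f y) (f x) with h | h | h
      · exact fun h1 _ => absurd h h1
      · exact fun _ _ => hf h.symm
      · exact fun _ h2 => absurd h h2
     irrefl := fun x => lt_irrefl _
     trans := fun x y z h1 h2 => lt_trans h2 h1 }⟩

variable [Fintype A]

open Classical in
noncomputable def sc (a b c : A) (ra rb rc : ℕ) (x : A) : ℕ :=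
  if x = a then Fintype.card A + ra
  else if x = b then Fintype.card A + rb
  else if x = c then Fintype.card A + rc
  else (Fintype.equivFin A x : ℕ)

lemma sc_inj {a b c : A} (hba : b ≠ a) (hca : c ≠ a) (hcb : c ≠ b)
    {ra rb rc : ℕ} (h1 : ra ≠ rb) (h2 : ra ≠ rc) (h3 : rb ≠ rc) :
    Function.Injective (sc a b c ra rb rc) := by
  intro x y h
  have hx := (Fintype.equivFin A x).isLt
  have hy := (Fintype.equivFin A y).isLt
  unfold sc at h
  split_ifs at h <;>
    first
    | (subst_vars; rfl)
    | omega
    | · exact (Fintype.equivFin A).injective (Fin.val_injective h)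
    | (subst_vars; simp_all)

noncomputable def triPref (a b c : A) (hba : b ≠ a) (hca : c ≠ a) (hcb : c ≠ b)
    (ra rb rc : ℕ) (h1 : ra ≠ rb) (h2 : ra ≠ rc) (h3 : rb ≠ rc) : Pref A :=
  ofScore (sc a b c ra rb rc) (sc_inj hba hca hcb h1 h2 h3)

variable {a b c : A} {hba : b ≠ a} {hca : c ≠ a} {hcb : c ≠ b}
  {ra rb rc : ℕ} {h1 : ra ≠ rb} {h2 : ra ≠ rc} {h3 : rb ≠ rc}

open Classical in
lemma sc_a : sc a b c ra rb rc a = Fintype.card A + ra := by simp [sc]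
open Classical in
lemma sc_b (hba : b ≠ a) : sc a b c ra rb rc b = Fintype.card A + rb := by simp [sc, hba]
open Classical in
lemma sc_c (hca : c ≠ a) (hcb : c ≠ b) : sc a b c ra rb rc c = Fintype.card A + rc := by
  simp [sc, hca, hcb]

lemma tri_ab : (triPref a b c hba hca hcb ra rb rc h1 h2 h3).1 a b ↔ rb < ra := by
  show sc a b c ra rb rc b < sc a b c ra rb rc a ↔ _
  rw [sc_a, sc_b hba]; omega

lemma tri_ba : (triPref a b c hba hca hcb ra rb rc h1 h2 h3).1 b a ↔ ra < rb := by
  show sc a b c ra rb rc a < sc a b c ra rb rc b ↔ _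
  rw [sc_a, sc_b hba]; omega

lemma tri_ac : (triPref a b c hba hca hcb ra rb rc h1 h2 h3).1 a c ↔ rc < ra := by
  show sc a b c ra rb rc c < sc a b c ra rb rc a ↔ _
  rw [sc_a, sc_c hca hcb]; omega

lemma tri_ca : (triPref a b c hba hca hcb ra rb rc h1 h2 h3).1 c a ↔ ra < rc := by
  show sc a b c ra rb rc a < sc a b c ra rb rc c ↔ _
  rw [sc_a, sc_c hca hcb]; omega

lemma tri_bc : (triPref a b c hba hca hcb ra rb rc h1 h2 h3).1 b c ↔ rc < rb := by
  show sc a b c ra rb rc c < sc a b c ra rb rc b ↔ _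
  rw [sc_b hba, sc_c hca hcb]; omega

lemma tri_cb : (triPref a b c hba hca hcb ra rb rc h1 h2 h3).1 c b ↔ rb < rc := by
  show sc a b c ra rb rc b < sc a b c ra rb rc c ↔ _
  rw [sc_b hba, sc_c hca hcb]; omega

lemma exists_third (hA : 3 ≤ Fintype.card A) (a b : A) : ∃ c : A, c ≠ a ∧ c ≠ b := by
  classical
  by_contra h
  push_neg at h
  have hsub : (Finset.univ : Finset A) ⊆ {a, b} := by
    intro x _
    rcases Classical.em (x = a) with rfl | hx
    · simp
    · simp [h x hx]
  have h1 := Finset.card_le_card hsub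
  simp only [Finset.card_univ] at h1
  have h2 : ({a, b} : Finset A).card ≤ 2 := by
    apply le_trans (Finset.card_insert_le _ _)
    simp
  omega

open Classical in
noncomputable def nite (p : Prop) (x y : ℕ) : ℕ := if p then x else y

lemma nite_pos {p : Prop} (h : p) (x y : ℕ) : nite p x y = x := by simp [nite, h]
lemma nite_neg {p : Prop} (h : ¬ p) (x y : ℕ) : nite p x y = y := by simp [nite, h]

/-! ### Social welfare function layer -/

variable (F : (Fin n → Pref A) → WeakOrd A)

def Triv (a b : A) : Prop := ∀ P : Fin n → Pref A, (F P).1 a b ∧ (F P).1 b a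

def UnanPos (a b : A) : Prop :=
  ∀ P : Fin n → Pref A, (∀ i, (P i).1 a b) → StrictPart (F P).1 a b

def Dec (σ : Fin n → Prop) (a b : A) : Prop :=
  ∀ P : Fin n → Pref A, (∀ i, ((P i).1 a b ↔ σ i)) → StrictPart (F P).1 a b

def Pareto : Prop := ∀ a b : A, a ≠ b → UnanPos F a b

def Frev : (Fin n → Pref A) → WeakOrd A := fun P =>
  ⟨fun x y => (F P).1 y x,
   fun x => (F P).2.1 x,
   fun _ _ _ h1 h2 => (F P).2.2.1 h2 h1,
   fun x y => ((F P).2.2.2 y x)⟩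

lemma frev_iia (hIIA : IIA F) : IIA (Frev F) := by
  intro P P' x y h
  have := hIIA P P' x y h
  exact ⟨this.2, this.1⟩

lemma frev_ni (hNI : NonImposition F) : NonImposition (Frev F) := fun x y => hNI y x

lemma transfer (hIIA : IIA F) {a b : A} (hab : a ≠ b) {P P' : Fin n → Pref A}
    (h : ∀ i, (P i).1 a b ↔ (P' i).1 a b) :
    ((F P).1 a b ↔ (F P').1 a b) ∧ ((F P).1 b a ↔ (F P').1 b a) := by
  refine hIIA P P' a b (fun i => ⟨h i, ?_⟩)
  rw [← prefNotIff (P i) hab, ← prefNotIff (P' i) hab]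
  exact not_congr (h i)

lemma transfer_sp (hIIA : IIA F) {a b : A} (hab : a ≠ b) {P P' : Fin n → Pref A}
    (h : ∀ i, (P i).1 a b ↔ (P' i).1 a b) :
    (StrictPart (F P).1 a b ↔ StrictPart (F P').1 a b) ∧
    (StrictPart (F P).1 b a ↔ StrictPart (F P').1 b a) := by
  obtain ⟨t1, t2⟩ := transfer F hIIA hab h
  exact ⟨and_congr t1 (not_congr t2), and_congr t2 (not_congr t1)⟩

lemma unan_strict (hIIA : IIA F) (hNI : NonImposition F) (hA : 3 ≤ Fintype.card A)
    (hNT : ∀ x y : A, x ≠ y → ¬ Triv F x y) {a b : A} (hab : a ≠ b) :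
    UnanPos F a b ∨ UnanPos (Frev F) a b := by
  obtain ⟨c, hca, hcb⟩ := exists_third hA a b
  have hba : b ≠ a := hab.symm
  set R0 : Fin n → Pref A := fun _ =>
    triPref a b c hba hca hcb 2 1 0 (by omega) (by omega) (by omega) with hR0
  have pat0 : ∀ i, (R0 i).1 a b := fun i => by simp [hR0, tri_ab]
  by_cases hsp : StrictPart (F R0).1 a b
  · left
    intro P hP
    exact (transfer_sp F hIIA hab (fun i => iff_of_true (pat0 i) (hP i))).1.mp hsp
  by_cases hsp' : StrictPart (F R0).1 b a
  · right
    intro P hP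
    exact (transfer_sp F hIIA hab (fun i => iff_of_true (pat0 i) (hP i))).2.mp hsp'
  · exfalso
    have hind1 : (F R0).1 a b := weak_of_not_sp _ hsp'
    have hind2 : (F R0).1 b a := weak_of_not_sp _ hsp
    apply hNT a c (Ne.symm hca)
    have hd1 : ∀ p : Prop, nite p 2 1 ≠ 0 := fun p => by
      by_cases h : p <;> simp [nite, h]
    have hd2 : ∀ p : Prop, nite p 2 1 ≠ nite p 1 2 := fun p => by
      by_cases h : p <;> simp [nite, h]
    have hd3 : ∀ p : Prop, (0 : ℕ) ≠ nite p 1 2 := fun p => by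
      by_cases h : p <;> simp [nite, h]
    set Rp : (Fin n → Prop) → (Fin n → Pref A) := fun σ i =>
      triPref a b c hba hca hcb (nite (σ i) 2 1) 0 (nite (σ i) 1 2)
        (hd1 (σ i)) (hd2 (σ i)) (hd3 (σ i)) with hRp
    have pat_ab : ∀ (σ : Fin n → Prop) i, (Rp σ i).1 a b := fun σ i => by
      by_cases h : σ i <;> simp [hRp, tri_ab, nite, h]
    have pat_ac : ∀ (σ : Fin n → Prop) i, ((Rp σ i).1 a c ↔ σ i) := fun σ i => by
      by_cases h : σ i <;> simp [hRp, tri_ac, nite, h]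
    have pat_bc : ∀ (σ : Fin n → Prop) i, ¬ (Rp σ i).1 b c := fun σ i => by
      by_cases h : σ i <;> simp [hRp, tri_bc, nite, h]
    have hindR : ∀ σ : Fin n → Prop, (F (Rp σ)).1 a b ∧ (F (Rp σ)).1 b a := by
      intro σ
      have h := transfer F hIIA hab (fun i => iff_of_true (pat0 i) (pat_ab σ i))
      exact ⟨h.1.mp hind1, h.2.mp hind2⟩
    have key : ∀ Q : Fin n → Pref A,
        ((F Q).1 a c ↔ (F (Rp (fun _ => False))).1 b c) ∧
        ((F Q).1 c a ↔ (F (Rp (fun _ => False))).1 c b) := by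
      intro Q
      set σ : Fin n → Prop := fun i => (Q i).1 a c with hσ
      have t1 := transfer F hIIA (show a ≠ c from Ne.symm hca)
        (P := Q) (P' := Rp σ) (fun i => (pat_ac σ i).symm)
      have hiff := indiff_congr (F (Rp σ)) (hindR σ).1 (hindR σ).2 c
      have t2 := transfer F hIIA (show b ≠ c from Ne.symm hcb)
        (P := Rp σ) (P' := Rp (fun _ => False))
        (fun i => iff_of_false (pat_bc σ i) (pat_bc (fun _ => False) i))
      exact ⟨t1.1.trans (hiff.1.trans t2.1), t1.2.trans (hiff.2.trans t2.2)⟩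
    obtain ⟨Q1, hQ1⟩ := hNI a c
    obtain ⟨Q2, hQ2⟩ := hNI c a
    intro P
    exact ⟨(key P).1.mpr ((key Q1).1.mp hQ1), (key P).2.mpr ((key Q2).2.mp hQ2)⟩

lemma triv_contag (hIIA : IIA F) (hNI : NonImposition F) {a b c : A}
    (hab : a ≠ b) (hca : c ≠ a) (hcb : c ≠ b)
    (h : Triv F a c) : Triv F a b := by
  have hba : b ≠ a := hab.symm
  have const : ∀ P P' : Fin n → Pref A,
      ((F P).1 a b ↔ (F P').1 a b) ∧ ((F P).1 b a ↔ (F P').1 b a) := by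
    intro P P'
    set τ : Fin n → Prop := fun i => (P i).1 c b with hτ
    set σ : Fin n → Prop := fun i => (P' i).1 a b with hσ
    have hd1 : ∀ i : Fin n, nite (σ i) 3 1 ≠ 2 := fun i => by
      by_cases h' : σ i <;> simp [nite, h']
    have hd2 : ∀ i : Fin n, nite (σ i) 3 1 ≠ nite (τ i) 4 0 := fun i => by
      by_cases h' : σ i <;> by_cases h'' : τ i <;> simp [nite, h', h'']
    have hd3 : ∀ i : Fin n, (2:ℕ) ≠ nite (τ i) 4 0 := fun i => by
      by_cases h'' : τ i <;> simp [nite, h'']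
    set R : Fin n → Pref A := fun i =>
      triPref a b c hba hca hcb (nite (σ i) 3 1) 2 (nite (τ i) 4 0)
        (hd1 i) (hd2 i) (hd3 i) with hR
    have pat_ab : ∀ i, ((R i).1 a b ↔ σ i) := fun i => by
      by_cases h' : σ i <;> simp [hR, tri_ab, nite, h']
    have pat_cb : ∀ i, ((R i).1 c b ↔ τ i) := fun i => by
      by_cases h'' : τ i <;> simp [hR, tri_cb, nite, h'']
    have t1 := transfer F hIIA (show c ≠ b from hcb) (P := P) (P' := R)
      (fun i => (pat_cb i).symm)
    have t2 := transfer F hIIA hab (P := R) (P' := P') (fun i => pat_ab i)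
    have e1 := indiff_congr (F P) (h P).1 (h P).2 b
    have e2 := indiff_congr (F R) (h R).1 (h R).2 b
    constructor
    · exact (e1.1.trans (t1.1.trans e2.1.symm)).trans t2.1
    · exact (e1.2.trans (t1.2.trans e2.2.symm)).trans t2.2
  obtain ⟨P1, hP1⟩ := hNI a b
  obtain ⟨P2, hP2⟩ := hNI b a
  intro P
  exact ⟨(const P P1).1.mpr hP1, (const P P2).2.mpr hP2⟩

lemma triv_symm {a b : A} (h : Triv F a b) : Triv F b a := fun P => (h P).symm

lemma nt_all (hIIA : IIA F) (hNI : NonImposition F) {a b : A} (hab : a ≠ b)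
    (h : ¬ Triv F a b) : ∀ x y : A, x ≠ y → ¬ Triv F x y := by
  have B : ∀ x y z : A, x ≠ y → z ≠ x → z ≠ y → ¬ Triv F x y → ¬ Triv F x z :=
    fun x y z hxy hzx hzy hnt ht => hnt (triv_contag F hIIA hNI hxy hzx hzy ht)
  intro x y hxy
  by_cases hxa : x = a
  · subst hxa
    by_cases hyb : y = b
    · subst hyb; exact h
    · exact B x b y hab (Ne.symm hxy) hyb h
  · by_cases hxb : x = b
    · subst hxb
      have h' : ¬ Triv F x a := fun ht => h (triv_symm F ht)
      by_cases hya : y = a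
      · subst hya; exact h'
      · exact B x a y (Ne.symm hab) (Ne.symm hxy) hya h'
    · have h1 : ¬ Triv F a x := B a b x hab hxa hxb h
      have h2 : ¬ Triv F x a := fun ht => h1 (triv_symm F ht)
      by_cases hya : y = a
      · subst hya; exact h2
      · exact B x a y hxa (Ne.symm hxy) hya h2


lemma unan_right (hIIA : IIA F) (hNI : NonImposition F) (hA : 3 ≤ Fintype.card A)
    (hNT : ∀ x y : A, x ≠ y → ¬ Triv F x y) {a b c : A}
    (hab : a ≠ b) (hca : c ≠ a) (hcb : c ≠ b)
    (h : UnanPos F a b) : UnanPos F a c := by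
  have hba : b ≠ a := hab.symm
  rcases unan_strict F hIIA hNI hA hNT (show a ≠ c from Ne.symm hca) with h' | h'
  · exact h'
  · exfalso
    have key : ∀ Q : Fin n → Pref A, StrictPart (F Q).1 c b := by
      intro Q
      set σ : Fin n → Prop := fun i => (Q i).1 b c with hσ
      have hd1 : ∀ i : Fin n, (2:ℕ) ≠ nite (σ i) 1 0 := fun i => by
        by_cases h'' : σ i <;> simp [nite, h'']
      have hd2 : ∀ i : Fin n, (2:ℕ) ≠ nite (σ i) 0 1 := fun i => by
        by_cases h'' : σ i <;> simp [nite, h'']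
      have hd3 : ∀ i : Fin n, nite (σ i) 1 0 ≠ nite (σ i) 0 1 := fun i => by
        by_cases h'' : σ i <;> simp [nite, h'']
      set R : Fin n → Pref A := fun i =>
        triPref a b c hba hca hcb 2 (nite (σ i) 1 0) (nite (σ i) 0 1)
          (hd1 i) (hd2 i) (hd3 i) with hR
      have pat_ab : ∀ i, (R i).1 a b := fun i => by
        by_cases h'' : σ i <;> simp [hR, tri_ab, nite, h'']
      have pat_ac : ∀ i, (R i).1 a c := fun i => by
        by_cases h'' : σ i <;> simp [hR, tri_ac, nite, h'']
      have pat_bc : ∀ i, ((R i).1 b c ↔ σ i) := fun i => by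
        by_cases h'' : σ i <;> simp [hR, tri_bc, nite, h'']
      have s1 : StrictPart (F R).1 a b := h R pat_ab
      have s2 : StrictPart (F R).1 c a := h' R pat_ac
      have s3 : StrictPart (F R).1 c b := sp_trans _ s2 s1
      exact ((transfer_sp F hIIA (show b ≠ c from Ne.symm hcb)
        (P := R) (P' := Q) (fun i => (pat_bc i).trans (Iff.rfl))).2).mp s3
    obtain ⟨Q, hQ⟩ := hNI b c
    exact (key Q).2 hQ

lemma unan_left (hIIA : IIA F) (hNI : NonImposition F) (hA : 3 ≤ Fintype.card A)
    (hNT : ∀ x y : A, x ≠ y → ¬ Triv F x y) {a b c : A}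
    (hab : a ≠ b) (hca : c ≠ a) (hcb : c ≠ b)
    (h : UnanPos F a b) : UnanPos F c b := by
  have hba : b ≠ a := hab.symm
  rcases unan_strict F hIIA hNI hA hNT (show c ≠ b from hcb) with h' | h'
  · exact h'
  · exfalso
    have key : ∀ Q : Fin n → Pref A, StrictPart (F Q).1 a c := by
      intro Q
      set σ : Fin n → Prop := fun i => (Q i).1 a c with hσ
      have hd1 : ∀ i : Fin n, nite (σ i) 2 1 ≠ 0 := fun i => by
        by_cases h'' : σ i <;> simp [nite, h'']
      have hd2 : ∀ i : Fin n, nite (σ i) 2 1 ≠ nite (σ i) 1 2 := fun i => by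
        by_cases h'' : σ i <;> simp [nite, h'']
      have hd3 : ∀ i : Fin n, (0:ℕ) ≠ nite (σ i) 1 2 := fun i => by
        by_cases h'' : σ i <;> simp [nite, h'']
      set R : Fin n → Pref A := fun i =>
        triPref a b c hba hca hcb (nite (σ i) 2 1) 0 (nite (σ i) 1 2)
          (hd1 i) (hd2 i) (hd3 i) with hR
      have pat_ab : ∀ i, (R i).1 a b := fun i => by
        by_cases h'' : σ i <;> simp [hR, tri_ab, nite, h'']
      have pat_cb : ∀ i, (R i).1 c b := fun i => by
        by_cases h'' : σ i <;> simp [hR, tri_cb, nite, h'']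
      have pat_ac : ∀ i, ((R i).1 a c ↔ σ i) := fun i => by
        by_cases h'' : σ i <;> simp [hR, tri_ac, nite, h'']
      have s1 : StrictPart (F R).1 a b := h R pat_ab
      have s2 : StrictPart (F R).1 b c := h' R pat_cb
      have s3 : StrictPart (F R).1 a c := sp_trans _ s1 s2
      exact ((transfer_sp F hIIA (show a ≠ c from Ne.symm hca)
        (P := R) (P' := Q) (fun i => pat_ac i)).1).mp s3
    obtain ⟨Q, hQ⟩ := hNI c a
    exact (key Q).2 hQ

lemma pareto_of_unan (hIIA : IIA F) (hNI : NonImposition F) (hA : 3 ≤ Fintype.card A)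
    (hNT : ∀ x y : A, x ≠ y → ¬ Triv F x y) {a b : A} (hab : a ≠ b)
    (h : UnanPos F a b) : Pareto F := by
  have hxb : ∀ x : A, x ≠ b → UnanPos F x b := by
    intro x hx
    by_cases hxa : x = a
    · subst hxa; exact h
    · exact unan_left F hIIA hNI hA hNT hab hxa hx h
  intro x y hxy
  by_cases hyb : y = b
  · subst hyb; exact hxb x hxy
  · by_cases hxb' : x = b
    · subst hxb'
      obtain ⟨c, hcb2, hcy⟩ := exists_third hA x y
      have h1 : UnanPos F c x := hxb c hcb2
      have h2 : UnanPos F c y :=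
        unan_right F hIIA hNI hA hNT hcb2 (Ne.symm hcy) hyb h1
      exact unan_left F hIIA hNI hA hNT hcy (Ne.symm hcb2) (Ne.symm hyb) h2
    · have h1 : UnanPos F x b := hxb x hxb'
      exact unan_right F hIIA hNI hA hNT hxb' (Ne.symm hxy) hyb h1

lemma dec_right (hIIA : IIA F) (hPar : Pareto F) {σ : Fin n → Prop} {a b c : A}
    (hab : a ≠ b) (hca : c ≠ a) (hcb : c ≠ b)
    (h : Dec F σ a b) : Dec F σ a c := by
  have hba : b ≠ a := hab.symm
  intro P hP
  have hd1 : ∀ i : Fin n, nite (σ i) 2 0 ≠ nite (σ i) 1 2 := fun i => by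
    by_cases h'' : σ i <;> simp [nite, h'']
  have hd2 : ∀ i : Fin n, nite (σ i) 2 0 ≠ nite (σ i) 0 1 := fun i => by
    by_cases h'' : σ i <;> simp [nite, h'']
  have hd3 : ∀ i : Fin n, nite (σ i) 1 2 ≠ nite (σ i) 0 1 := fun i => by
    by_cases h'' : σ i <;> simp [nite, h'']
  set R : Fin n → Pref A := fun i =>
    triPref a b c hba hca hcb (nite (σ i) 2 0) (nite (σ i) 1 2) (nite (σ i) 0 1)
      (hd1 i) (hd2 i) (hd3 i) with hR
  have pat_ab : ∀ i, ((R i).1 a b ↔ σ i) := fun i => by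
    by_cases h'' : σ i <;> simp [hR, tri_ab, nite, h'']
  have pat_bc : ∀ i, (R i).1 b c := fun i => by
    by_cases h'' : σ i <;> simp [hR, tri_bc, nite, h'']
  have pat_ac : ∀ i, ((R i).1 a c ↔ σ i) := fun i => by
    by_cases h'' : σ i <;> simp [hR, tri_ac, nite, h'']
  have s1 : StrictPart (F R).1 a b := h R pat_ab
  have s2 : StrictPart (F R).1 b c := hPar b c (Ne.symm hcb) R pat_bc
  have s3 : StrictPart (F R).1 a c := sp_trans _ s1 s2
  exact ((transfer_sp F hIIA (show a ≠ c from Ne.symm hca)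
    (P := R) (P' := P) (fun i => (pat_ac i).trans (hP i).symm)).1).mp s3

lemma dec_left (hIIA : IIA F) (hPar : Pareto F) {σ : Fin n → Prop} {a b c : A}
    (hab : a ≠ b) (hca : c ≠ a) (hcb : c ≠ b)
    (h : Dec F σ a b) : Dec F σ c b := by
  have hba : b ≠ a := hab.symm
  intro P hP
  have hd1 : ∀ i : Fin n, nite (σ i) 1 0 ≠ nite (σ i) 0 2 := fun i => by
    by_cases h'' : σ i <;> simp [nite, h'']
  have hd2 : ∀ i : Fin n, nite (σ i) 1 0 ≠ nite (σ i) 2 1 := fun i => by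
    by_cases h'' : σ i <;> simp [nite, h'']
  have hd3 : ∀ i : Fin n, nite (σ i) 0 2 ≠ nite (σ i) 2 1 := fun i => by
    by_cases h'' : σ i <;> simp [nite, h'']
  set R : Fin n → Pref A := fun i =>
    triPref a b c hba hca hcb (nite (σ i) 1 0) (nite (σ i) 0 2) (nite (σ i) 2 1)
      (hd1 i) (hd2 i) (hd3 i) with hR
  have pat_ca : ∀ i, (R i).1 c a := fun i => by
    by_cases h'' : σ i <;> simp [hR, tri_ca, nite, h'']
  have pat_ab : ∀ i, ((R i).1 a b ↔ σ i) := fun i => by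
    by_cases h'' : σ i <;> simp [hR, tri_ab, nite, h'']
  have pat_cb : ∀ i, ((R i).1 c b ↔ σ i) := fun i => by
    by_cases h'' : σ i <;> simp [hR, tri_cb, nite, h'']
  have s1 : StrictPart (F R).1 c a := hPar c a hca R pat_ca
  have s2 : StrictPart (F R).1 a b := h R pat_ab
  have s3 : StrictPart (F R).1 c b := sp_trans _ s1 s2
  exact ((transfer_sp F hIIA (show c ≠ b from hcb)
    (P := R) (P' := P) (fun i => (pat_cb i).trans (hP i).symm)).1).mp s3

lemma dec_all (hIIA : IIA F) (hPar : Pareto F) (hA : 3 ≤ Fintype.card A)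
    {σ : Fin n → Prop} {a b : A} (hab : a ≠ b) (h : Dec F σ a b) :
    ∀ x y : A, x ≠ y → Dec F σ x y := by
  have H1 : ∀ y' : A, y' ≠ a → y' ≠ b → Dec F σ a y' :=
    fun y' h1 h2 => dec_right F hIIA hPar hab h1 h2 h
  have H2 : ∀ x' : A, x' ≠ a → x' ≠ b → Dec F σ x' b :=
    fun x' h1 h2 => dec_left F hIIA hPar hab h1 h2 h
  have Hba : Dec F σ b a := by
    obtain ⟨c, h1, h2⟩ := exists_third hA a b
    have hc1 : Dec F σ c b := H2 c h1 h2
    have hc2 : Dec F σ c a := dec_right F hIIA hPar h2 (Ne.symm h1) hab hc1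
    exact dec_left F hIIA hPar h1 (Ne.symm h2) (Ne.symm hab) hc2
  intro x y hxy
  by_cases hx : x = a
  · subst hx
    by_cases hy : y = b
    · subst hy; exact h
    · exact H1 y (Ne.symm hxy) hy
  · by_cases hxb : x = b
    · subst hxb
      by_cases hy : y = a
      · subst hy; exact Hba
      · exact dec_right F hIIA hPar (Ne.symm hab) (Ne.symm hxy) hy Hba
    · by_cases hy : y = b
      · subst hy; exact H2 x hx hxb
      · by_cases hya : y = a
        · subst hya
          exact dec_right F hIIA hPar hxb (Ne.symm hx) hab (H2 x hx hxb)
        · exact dec_right F hIIA hPar hxb (Ne.symm hxy) hy (H2 x hx hxb)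

lemma dec_mono (hIIA : IIA F) (hPar : Pareto F) (hA : 3 ≤ Fintype.card A)
    {σ τ : Fin n → Prop} (hστ : ∀ i, σ i → τ i)
    (h : ∀ x y : A, x ≠ y → Dec F σ x y) :
    ∀ x y : A, x ≠ y → Dec F τ x y := by
  intro x y hxy P hP
  obtain ⟨c, hcx, hcy⟩ := exists_third hA x y
  have hyx : y ≠ x := hxy.symm
  have hd1 : ∀ i : Fin n, nite (σ i) 2 (nite (τ i) 1 0) ≠ nite (σ i) 0 (nite (τ i) 0 1) :=
    fun i => by by_cases h1 : σ i <;> by_cases h2 : τ i <;> simp [nite, h1, h2]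
  have hd2 : ∀ i : Fin n, nite (σ i) 2 (nite (τ i) 1 0) ≠ nite (σ i) 1 2 :=
    fun i => by by_cases h1 : σ i <;> by_cases h2 : τ i <;> simp [nite, h1, h2]
  have hd3 : ∀ i : Fin n, nite (σ i) 0 (nite (τ i) 0 1) ≠ nite (σ i) 1 2 :=
    fun i => by by_cases h1 : σ i <;> by_cases h2 : τ i <;> simp [nite, h1, h2]
  set R : Fin n → Pref A := fun i =>
    triPref x y c hyx hcx hcy
      (nite (σ i) 2 (nite (τ i) 1 0)) (nite (σ i) 0 (nite (τ i) 0 1)) (nite (σ i) 1 2)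
      (hd1 i) (hd2 i) (hd3 i) with hR
  have pat_xc : ∀ i, ((R i).1 x c ↔ σ i) := fun i => by
    by_cases h1 : σ i <;> by_cases h2 : τ i <;> simp [hR, tri_ac, nite, h1, h2]
  have pat_xy : ∀ i, ((R i).1 x y ↔ τ i) := fun i => by
    by_cases h1 : σ i
    · simp [hR, tri_ab, nite, h1, hστ i h1]
    · by_cases h2 : τ i <;> simp [hR, tri_ab, nite, h1, h2]
  have pat_cy : ∀ i, (R i).1 c y := fun i => by
    by_cases h1 : σ i <;> by_cases h2 : τ i <;> simp [hR, tri_cb, nite, h1, h2]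
  have s1 : StrictPart (F R).1 x c := h x c (Ne.symm hcx) R pat_xc
  have s2 : StrictPart (F R).1 c y := hPar c y hcy R pat_cy
  have s3 : StrictPart (F R).1 x y := sp_trans _ s1 s2
  exact ((transfer_sp F hIIA hxy
    (P := R) (P' := P) (fun i => (pat_xy i).trans (hP i).symm)).1).mp s3

lemma dec_empty (hPar : Pareto F) (hA : 3 ≤ Fintype.card A) {a b : A} (hab : a ≠ b) :
    ¬ Dec F (fun _ => False) a b := by
  intro h
  obtain ⟨c, hca, hcb⟩ := exists_third hA a b
  have hba : b ≠ a := hab.symm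
  set R : Fin n → Pref A := fun _ =>
    triPref a b c hba hca hcb 0 1 2 (by omega) (by omega) (by omega) with hR
  have s1 : StrictPart (F R).1 a b := h R (fun i => by simp [hR, tri_ab])
  have s2 : StrictPart (F R).1 b a := hPar b a hba R (fun i => by simp [hR, tri_ba])
  exact s2.2 s1.1

lemma dec_contract (hIIA : IIA F) (hPar : Pareto F) (hA : 3 ≤ Fintype.card A)
    {σ σ1 σ2 : Fin n → Prop}
    (hu : ∀ i, σ i ↔ σ1 i ∨ σ2 i) (hd : ∀ i, ¬ (σ1 i ∧ σ2 i))
    (h : ∀ x y : A, x ≠ y → Dec F σ x y) :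
    (∀ x y : A, x ≠ y → Dec F σ1 x y) ∨ (∀ x y : A, x ≠ y → Dec F σ2 x y) := by
  have hpos : 0 < Fintype.card A := by omega
  obtain ⟨a⟩ := Fintype.card_pos_iff.mp hpos
  obtain ⟨b, hba, -⟩ := exists_third hA a a
  have hab : a ≠ b := Ne.symm hba
  obtain ⟨c, hca, hcb⟩ := exists_third hA a b
  have hd1 : ∀ i : Fin n,
      nite (σ1 i) 2 (nite (σ2 i) 1 0) ≠ nite (σ1 i) 1 (nite (σ2 i) 0 2) :=
    fun i => by by_cases h1 : σ1 i <;> by_cases h2 : σ2 i <;> simp [nite, h1, h2]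
  have hd2 : ∀ i : Fin n,
      nite (σ1 i) 2 (nite (σ2 i) 1 0) ≠ nite (σ1 i) 0 (nite (σ2 i) 2 1) :=
    fun i => by by_cases h1 : σ1 i <;> by_cases h2 : σ2 i <;> simp [nite, h1, h2]
  have hd3 : ∀ i : Fin n,
      nite (σ1 i) 1 (nite (σ2 i) 0 2) ≠ nite (σ1 i) 0 (nite (σ2 i) 2 1) :=
    fun i => by by_cases h1 : σ1 i <;> by_cases h2 : σ2 i <;> simp [nite, h1, h2]
  set R : Fin n → Pref A := fun i =>
    triPref a b c hba hca hcb
      (nite (σ1 i) 2 (nite (σ2 i) 1 0))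
      (nite (σ1 i) 1 (nite (σ2 i) 0 2))
      (nite (σ1 i) 0 (nite (σ2 i) 2 1))
      (hd1 i) (hd2 i) (hd3 i) with hR
  have pat_ab : ∀ i, ((R i).1 a b ↔ σ i) := fun i => by
    by_cases h1 : σ1 i <;> by_cases h2 : σ2 i <;>
      simp [hR, tri_ab, nite, h1, h2, hu i]
  have pat_cb : ∀ i, ((R i).1 c b ↔ σ2 i) := fun i => by
    by_cases h1 : σ1 i <;> by_cases h2 : σ2 i <;>
      simp [hR, tri_cb, nite, h1, h2]
    · exact (hd i ⟨h1, h2⟩).elim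
  have pat_ac : ∀ i, ((R i).1 a c ↔ σ1 i) := fun i => by
    by_cases h1 : σ1 i <;> by_cases h2 : σ2 i <;>
      simp [hR, tri_ac, nite, h1, h2]
  have s1 : StrictPart (F R).1 a b := h a b hab R pat_ab
  by_cases hc : StrictPart (F R).1 c b
  · right
    have hdec : Dec F σ2 c b := by
      intro P hP
      exact ((transfer_sp F hIIA hcb
        (P := R) (P' := P) (fun i => (pat_cb i).trans (hP i).symm)).1).mp hc
    exact dec_all F hIIA hPar hA hcb hdec
  · left
    have hw : (F R).1 b c := weak_of_not_sp _ hc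
    have s3 : StrictPart (F R).1 a c := sp_weak_trans _ s1 hw
    have hdec : Dec F σ1 a c := by
      intro P hP
      exact ((transfer_sp F hIIA (Ne.symm hca)
        (P := R) (P' := P) (fun i => (pat_ac i).trans (hP i).symm)).1).mp s3
    exact dec_all F hIIA hPar hA (Ne.symm hca) hdec

lemma arrow (hIIA : IIA F) (hPar : Pareto F) (hA : 3 ≤ Fintype.card A) :
    Dictatorial F := by
  classical
  have hpos : 0 < Fintype.card A := by omega
  obtain ⟨a0⟩ := Fintype.card_pos_iff.mp hpos
  obtain ⟨b0, hb0, -⟩ := exists_third hA a0 a0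
  have hab0 : a0 ≠ b0 := Ne.symm hb0
  have dec_congr : ∀ {σ τ : Fin n → Prop} {x y : A},
      (∀ i, σ i ↔ τ i) → Dec F σ x y → Dec F τ x y :=
    fun h hdec P hP => hdec P (fun i => (hP i).trans (h i).symm)
  have key : ∀ (k : ℕ) (s : Finset (Fin n)), s.card ≤ k →
      (∀ x y : A, x ≠ y → Dec F (fun i => i ∈ s) x y) →
      ∃ i : Fin n, ∀ x y : A, x ≠ y → Dec F (fun j => j = i) x y := by
    intro k
    induction k with
    | zero =>
      intro s hs hT
      exfalso
      have hse : s = ∅ := Finset.card_eq_zero.mp (Nat.le_zero.mp hs)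
      subst hse
      exact dec_empty F hPar hA hab0
        (dec_congr (fun i => by simp) (hT a0 b0 hab0))
    | succ k ih =>
      intro s hs hT
      by_cases hsk : s.card ≤ k
      · exact ih s hsk hT
      · have hcard : s.card = k + 1 := le_antisymm hs (not_le.mp hsk)
        have hpos' : 0 < s.card := by omega
        obtain ⟨i, hi⟩ := Finset.card_pos.mp hpos'
        have hu : ∀ j, j ∈ s ↔ (j = i ∨ j ∈ s.erase i) := by
          intro j
          constructor
          · intro hj
            by_cases hji : j = i
            · exact Or.inl hji
            · exact Or.inr (Finset.mem_erase.mpr ⟨hji, hj⟩)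
          · rintro (rfl | hj)
            · exact hi
            · exact Finset.mem_of_mem_erase hj
        have hdis : ∀ j, ¬ (j = i ∧ j ∈ s.erase i) := by
          rintro j ⟨rfl, hj⟩
          exact (Finset.mem_erase.mp hj).1 rfl
        rcases dec_contract F hIIA hPar hA hu hdis hT with h1 | h2
        · exact ⟨i, h1⟩
        · apply ih (s.erase i) _ h2
          have := Finset.card_erase_of_mem hi
          omega
  obtain ⟨i, hi⟩ := key (Finset.univ : Finset (Fin n)).card Finset.univ le_rfl
    (fun x y hxy P hP => hPar x y hxy P (fun j => (hP j).mpr (Finset.mem_univ j)))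
  refine ⟨i, ?_⟩
  intro P x y hxy'
  have hxy : x ≠ y := prefNe _ hxy'
  exact dec_mono F hIIA hPar hA (σ := fun j => j = i) (τ := fun j => (P j).1 x y)
    (fun j hj => hj ▸ hxy') hi x y hxy P (fun j => Iff.rfl)

end WilsonProof

/-- **Wilson's Theorem.** -/
theorem wilson {A : Type*} [Fintype A] (hA : 3 ≤ Fintype.card A)
    {n : ℕ} (F : (Fin n → Pref A) → WeakOrd A)
    (hIIA : IIA F) (hNI : NonImposition F) :
    NullRule F ∨ Dictatorial F ∨ AntiDictatorial F := by
  classical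
  open WilsonProof in
  by_cases hnull : NullRule F
  · exact Or.inl hnull
  · right
    rw [NullRule] at hnull
    push_neg at hnull
    obtain ⟨P0, a, b, hPab⟩ := hnull
    have hab : a ≠ b := by
      rintro rfl
      exact hPab ((F P0).2.1 a) ((F P0).2.1 a)
    have hnt : ¬ WilsonProof.Triv F a b := fun h => hPab (h P0).1 (h P0).2
    have hNT := WilsonProof.nt_all F hIIA hNI hab hnt
    rcases WilsonProof.unan_strict F hIIA hNI hA hNT hab with h | h
    · left
      exact WilsonProof.arrow F hIIA
        (WilsonProof.pareto_of_unan F hIIA hNI hA hNT hab h) hA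
    · right
      set G := WilsonProof.Frev F with hG
      have hIIA' : IIA G := WilsonProof.frev_iia F hIIA
      have hNI' : NonImposition G := WilsonProof.frev_ni F hNI
      have hNT' : ∀ x y : A, x ≠ y → ¬ WilsonProof.Triv G x y := by
        intro x y hxy ht
        exact hNT y x (Ne.symm hxy) (fun P => (ht P))
      have hPar : WilsonProof.Pareto G :=
        WilsonProof.pareto_of_unan G hIIA' hNI' hA hNT' hab h
      obtain ⟨i, hi⟩ := WilsonProof.arrow G hIIA' hPar hA
      exact ⟨i, fun P x y hxy => hi P x y hxy⟩
end

section
/- Let A be a finite set of candidates with |A| ≥ 3 and let N = {1,…,n} be a finite set of voters. If a social welfare function F mapping profiles of linear orders over A to weak orders over A satisfies Independence of Irrelevant Alternatives (IIA) and Non-Imposition (NI), then F is either null (all candidates socially indifferent at every profile), or F satisfies Weak Pareto, or F satisfies inverse Weak Pareto. -/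
/-- Weak Pareto: unanimous strict preference for `a` over `b` yields strict social
preference for `a` over `b`. -/
def WeakPareto {A : Type*} {n : ℕ} (F : (Fin n → Pref A) → WeakOrd A) : Prop :=
  ∀ (P : Fin n → Pref A) (a b : A), (∀ i, (P i).1 a b) → StrictPart (F P).1 a b

/-- Inverse Weak Pareto: unanimous strict preference for `a` over `b` yields strict
social preference for `b` over `a`. -/
def InverseWeakPareto {A : Type*} {n : ℕ} (F : (Fin n → Pref A) → WeakOrd A) : Prop :=
  ∀ (P : Fin n → Pref A) (a b : A), (∀ i, (P i).1 a b) → StrictPart (F P).1 b a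

section helpers
variable {A : Type*}

lemma sto_rev {r : A → A → Prop} (h : IsStrictTotalOrder A r) {x y : A} (hxy : x ≠ y) :
    r x y ↔ ¬ r y x := by
  letI := h
  constructor
  · exact fun h1 h2 => irrefl_of r x (trans_of r h1 h2)
  · intro h1
    rcases trichotomous_of r x y with h2 | h2 | h2
    · exact h2
    · exact absurd h2 hxy
    · exact absurd h2 h1

lemma pref_asymm (O : Pref A) {x y : A} (h : O.1 x y) : ¬ O.1 y x := by
  letI := O.2
  exact fun h' => irrefl_of O.1 x (trans_of O.1 h h')

noncomputable def mkPref (f : A → ℕ) : Pref A :=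
  ⟨fun x y => f x < f y ∨ (f x = f y ∧ WellOrderingRel x y),
   { trichotomous := by
       intro x y hxy hyx
       refine (?_ : (f x < f y ∨ (f x = f y ∧ WellOrderingRel x y)) ∨ x = y ∨
         (f y < f x ∨ (f y = f x ∧ WellOrderingRel y x))).elim (fun h => absurd h hxy)
         (fun h => h.elim id (fun h => absurd h hyx))
       rcases lt_trichotomy (f x) (f y) with h | h | h
       · exact Or.inl (Or.inl h)
       · rcases trichotomous_of WellOrderingRel x y with h' | h' | h'
         · exact Or.inl (Or.inr ⟨h, h'⟩)
         · exact Or.inr (Or.inl h')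
         · exact Or.inr (Or.inr (Or.inr ⟨h.symm, h'⟩))
       · exact Or.inr (Or.inr (Or.inl h))
     irrefl := by
       intro x h
       rcases h with h | ⟨_, h⟩
       · omega
       · exact irrefl_of WellOrderingRel x h
     trans := by
       intro x y z hxy hyz
       rcases hxy with h1 | ⟨h1, w1⟩ <;> rcases hyz with h2 | ⟨h2, w2⟩
       · exact Or.inl (h1.trans h2)
       · exact Or.inl (h2 ▸ h1)
       · exact Or.inl (h1 ▸ h2)
       · exact Or.inr ⟨h1.trans h2, trans_of WellOrderingRel w1 w2⟩ }⟩

lemma mkPref_rel {f : A → ℕ} {x y : A} (h : f x < f y) : (mkPref f).1 x y := Or.inl h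

lemma mkPref_not_rel {f : A → ℕ} {x y : A} (h : f y < f x) : ¬ (mkPref f).1 x y := by
  rintro (h' | ⟨h', _⟩) <;> omega

open Classical in
noncomputable def ord2 (a b : A) : Pref A :=
  mkPref (fun x => if x = a then 0 else if x = b then 1 else 2)

lemma ord2_ab {a b : A} (hba : b ≠ a) : (ord2 a b).1 a b :=
  mkPref_rel (by simp [ord2, hba])

open Classical in
noncomputable def ord3 (a b c : A) : Pref A :=
  mkPref (fun x => if x = a then 0 else if x = b then 1 else if x = c then 2 else 3)

lemma ord3_ab {a b c : A} (hba : b ≠ a) : (ord3 a b c).1 a b :=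
  mkPref_rel (by simp [ord3, hba])
lemma ord3_bc {a b c : A} (hba : b ≠ a) (hca : c ≠ a) (hcb : c ≠ b) : (ord3 a b c).1 b c :=
  mkPref_rel (by simp [ord3, hba, hca, hcb])
lemma ord3_ac {a b c : A} (hca : c ≠ a) (hcb : c ≠ b) : (ord3 a b c).1 a c :=
  mkPref_rel (by simp [ord3, hca, hcb])
end helpers

section main
variable {A : Type*} {n : ℕ}

open Classical in
noncomputable def stdP (a b : A) (S : Fin n → Prop) : Fin n → Pref A :=
  fun i => if S i then ord2 a b else ord2 b a

lemma stdP_spec {a b : A} {S : Fin n → Prop} (hab : a ≠ b) (i : Fin n) :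
    (stdP a b S i).1 a b ↔ S i := by
  by_cases h : S i <;> simp [stdP, h]
  · exact ord2_ab hab.symm
  · exact pref_asymm _ (ord2_ab hab)

variable (F : (Fin n → Pref A) → WeakOrd A)

noncomputable def Pos (a b : A) (S : Fin n → Prop) : Prop :=
  StrictPart (F (stdP a b S)).1 a b
noncomputable def Nneg (a b : A) (S : Fin n → Prop) : Prop :=
  (F (stdP a b S)).1 a b

variable {F}

lemma agree (hIIA : IIA F) {a b : A} (hab : a ≠ b) {P P' : Fin n → Pref A}
    (h : ∀ i, ((P i).1 a b ↔ (P' i).1 a b)) :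
    ((F P).1 a b ↔ (F P').1 a b) ∧ ((F P).1 b a ↔ (F P').1 b a) :=
  hIIA P P' a b fun i => ⟨h i, by
    rw [sto_rev (P i).2 hab.symm, sto_rev (P' i).2 hab.symm]
    exact not_congr (h i)⟩

lemma pos_iff (hIIA : IIA F) {a b : A} {S : Fin n → Prop} (hab : a ≠ b)
    {P : Fin n → Pref A} (hP : ∀ i, ((P i).1 a b ↔ S i)) :
    StrictPart (F P).1 a b ↔ Pos F a b S := by
  have h := agree hIIA hab (P' := stdP a b S) (fun i => (hP i).trans (stdP_spec hab i).symm)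
  unfold Pos StrictPart
  rw [h.1, h.2]

lemma nneg_iff (hIIA : IIA F) {a b : A} {S : Fin n → Prop} (hab : a ≠ b)
    {P : Fin n → Pref A} (hP : ∀ i, ((P i).1 a b ↔ S i)) :
    (F P).1 a b ↔ Nneg F a b S := by
  have h := agree hIIA hab (P' := stdP a b S) (fun i => (hP i).trans (stdP_spec hab i).symm)
  exact h.1

lemma pos_congr (hIIA : IIA F) {a b : A} {S S' : Fin n → Prop} (hab : a ≠ b)
    (h : ∀ i, S i ↔ S' i) : Pos F a b S ↔ Pos F a b S' :=
  pos_iff hIIA hab (P := stdP a b S) (fun i => (stdP_spec hab i).trans (h i))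

lemma nneg_congr (hIIA : IIA F) {a b : A} {S S' : Fin n → Prop} (hab : a ≠ b)
    (h : ∀ i, S i ↔ S' i) : Nneg F a b S ↔ Nneg F a b S' :=
  nneg_iff hIIA hab (P := stdP a b S) (fun i => (stdP_spec hab i).trans (h i))

lemma pos_of_not_nneg (hIIA : IIA F) {a b : A} {S : Fin n → Prop} (hab : a ≠ b)
    (h : ¬ Nneg F b a (fun i => ¬ S i)) : Pos F a b S := by
  have hba : (F (stdP a b S)).1 b a ↔ Nneg F b a (fun i => ¬ S i) :=
    nneg_iff hIIA hab.symm (P := stdP a b S)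
      (fun i => by rw [sto_rev (stdP a b S i).2 hab.symm]; exact not_congr (stdP_spec hab i))
  have h2 : ¬ (F (stdP a b S)).1 b a := fun hh => h (hba.mp hh)
  rcases (F (stdP a b S)).2.2.2 a b with h1 | h1
  · exact ⟨h1, h2⟩
  · exact absurd h1 h2

lemma exists_nneg (hIIA : IIA F) (hNI : NonImposition F) {a b : A} (hab : a ≠ b) :
    ∃ T : Fin n → Prop, Nneg F a b T := by
  obtain ⟨P, hP⟩ := hNI a b
  exact ⟨fun i => (P i).1 a b, (nneg_iff hIIA hab (fun i => Iff.rfl)).mp hP⟩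

end main

section rules
variable {A : Type*} {n : ℕ} {F : (Fin n → Pref A) → WeakOrd A}

open Classical in
noncomputable def profU (p q r : A) (S₁ S₂ : Fin n → Prop) : Fin n → Pref A :=
  fun i => if S₁ i then (if S₂ i then ord3 p q r else ord3 p r q)
           else (if S₂ i then ord3 q p r else ord3 r q p)

lemma profU_spec {p q r : A} (hpq : p ≠ q) (hqr : q ≠ r) (hpr : p ≠ r)
    (S₁ S₂ : Fin n → Prop) :
    (∀ i, ((profU p q r S₁ S₂ i).1 p q ↔ S₁ i)) ∧
    (∀ i, ((profU p q r S₁ S₂ i).1 q r ↔ S₂ i)) ∧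
    (∀ i, ((profU p q r S₁ S₂ i).1 p r ↔ (S₁ i ∨ S₂ i))) := by
  refine ⟨fun i => ?_, fun i => ?_, fun i => ?_⟩ <;>
    by_cases h1 : S₁ i <;> by_cases h2 : S₂ i <;> simp [profU, h1, h2]
  -- (p,q) component
  · exact ord3_ab hpq.symm
  · exact ord3_ac hpq.symm hqr
  · exact pref_asymm _ (ord3_ab hpq)
  · exact pref_asymm _ (ord3_bc hqr hpr hpq)
  -- (q,r) component
  · exact ord3_bc hpq.symm hpr.symm hqr.symm
  · exact pref_asymm _ (ord3_bc hpr.symm hpq.symm hqr)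
  · exact ord3_ac hqr.symm hpr.symm
  · exact pref_asymm _ (ord3_ab hqr)
  -- (p,r) component
  · exact ord3_ac hpr.symm hqr.symm
  · exact ord3_ab hpr.symm
  · exact ord3_bc hpq hqr.symm hpr.symm
  · exact pref_asymm _ (ord3_ac hpr hpq)

open Classical in
noncomputable def profI (p q r : A) (S₁ S₂ : Fin n → Prop) : Fin n → Pref A :=
  fun i => if S₁ i then (if S₂ i then ord3 p q r else ord3 r p q)
           else (if S₂ i then ord3 q r p else ord3 r q p)

lemma profI_spec {p q r : A} (hpq : p ≠ q) (hqr : q ≠ r) (hpr : p ≠ r)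
    (S₁ S₂ : Fin n → Prop) :
    (∀ i, ((profI p q r S₁ S₂ i).1 p q ↔ S₁ i)) ∧
    (∀ i, ((profI p q r S₁ S₂ i).1 q r ↔ S₂ i)) ∧
    (∀ i, ((profI p q r S₁ S₂ i).1 p r ↔ (S₁ i ∧ S₂ i))) := by
  refine ⟨fun i => ?_, fun i => ?_, fun i => ?_⟩ <;>
    by_cases h1 : S₁ i <;> by_cases h2 : S₂ i <;> simp [profI, h1, h2]
  · exact ord3_ab hpq.symm
  · exact ord3_bc hpr hqr hpq.symm
  · exact pref_asymm _ (ord3_ac hpq hpr)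
  · exact pref_asymm _ (ord3_bc hqr hpr hpq)
  · exact ord3_bc hpq.symm hpr.symm hqr.symm
  · exact pref_asymm _ (ord3_ac hqr hpq.symm)
  · exact ord3_ab hqr.symm
  · exact pref_asymm _ (ord3_ab hqr)
  · exact ord3_ac hpr.symm hqr.symm
  · exact pref_asymm _ (ord3_ab hpr)
  · exact pref_asymm _ (ord3_bc hqr.symm hpq hpr)
  · exact pref_asymm _ (ord3_ac hpr hpq)

lemma rule1 (hIIA : IIA F) {p q r : A} {S₁ S₂ : Fin n → Prop}
    (hpq : p ≠ q) (hqr : q ≠ r) (hpr : p ≠ r)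
    (h1 : Pos F p q S₁) (h2 : Nneg F q r S₂) :
    Pos F p r (fun i => S₁ i ∨ S₂ i) := by
  obtain ⟨c1, c2, c3⟩ := profU_spec hpq hqr hpr S₁ S₂
  have hs : StrictPart (F (profU p q r S₁ S₂)).1 p q := (pos_iff hIIA hpq c1).mpr h1
  have hw : (F (profU p q r S₁ S₂)).1 q r := (nneg_iff hIIA hqr c2).mpr h2
  have hT : Transitive (F (profU p q r S₁ S₂)).1 := (F _).2.2.1
  exact (pos_iff hIIA hpr c3).mp ⟨hT hs.1 hw, fun h => hs.2 (hT hw h)⟩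

lemma rule2 (hIIA : IIA F) {p q r : A} {S₁ S₂ : Fin n → Prop}
    (hpq : p ≠ q) (hqr : q ≠ r) (hpr : p ≠ r)
    (h1 : Nneg F p q S₁) (h2 : Pos F q r S₂) :
    Pos F p r (fun i => S₁ i ∨ S₂ i) := by
  obtain ⟨c1, c2, c3⟩ := profU_spec hpq hqr hpr S₁ S₂
  have hw : (F (profU p q r S₁ S₂)).1 p q := (nneg_iff hIIA hpq c1).mpr h1
  have hs : StrictPart (F (profU p q r S₁ S₂)).1 q r := (pos_iff hIIA hqr c2).mpr h2
  have hT : Transitive (F (profU p q r S₁ S₂)).1 := (F _).2.2.1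
  exact (pos_iff hIIA hpr c3).mp ⟨hT hw hs.1, fun h => hs.2 (hT h hw)⟩

lemma rule3 (hIIA : IIA F) {p q r : A} {S₁ S₂ : Fin n → Prop}
    (hpq : p ≠ q) (hqr : q ≠ r) (hpr : p ≠ r)
    (h1 : Pos F p q S₁) (h2 : Nneg F q r S₂) :
    Pos F p r (fun i => S₁ i ∧ S₂ i) := by
  obtain ⟨c1, c2, c3⟩ := profI_spec hpq hqr hpr S₁ S₂
  have hs : StrictPart (F (profI p q r S₁ S₂)).1 p q := (pos_iff hIIA hpq c1).mpr h1
  have hw : (F (profI p q r S₁ S₂)).1 q r := (nneg_iff hIIA hqr c2).mpr h2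
  have hT : Transitive (F (profI p q r S₁ S₂)).1 := (F _).2.2.1
  exact (pos_iff hIIA hpr c3).mp ⟨hT hs.1 hw, fun h => hs.2 (hT hw h)⟩

lemma rule4 (hIIA : IIA F) {p q r : A} {S₁ S₂ : Fin n → Prop}
    (hpq : p ≠ q) (hqr : q ≠ r) (hpr : p ≠ r)
    (h1 : Nneg F p q S₁) (h2 : Pos F q r S₂) :
    Pos F p r (fun i => S₁ i ∧ S₂ i) := by
  obtain ⟨c1, c2, c3⟩ := profI_spec hpq hqr hpr S₁ S₂
  have hw : (F (profI p q r S₁ S₂)).1 p q := (nneg_iff hIIA hpq c1).mpr h1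
  have hs : StrictPart (F (profI p q r S₁ S₂)).1 q r := (pos_iff hIIA hqr c2).mpr h2
  have hT : Transitive (F (profI p q r S₁ S₂)).1 := (F _).2.2.1
  exact (pos_iff hIIA hpr c3).mp ⟨hT hw hs.1, fun h => hs.2 (hT h hw)⟩

end rules

section spread
variable {A : Type*} {n : ℕ} {F : (Fin n → Pref A) → WeakOrd A}

lemma exists_third [Fintype A] (hA : 3 ≤ Fintype.card A) (p q : A) :
    ∃ c, c ≠ p ∧ c ≠ q := by
  classical
  by_contra h
  push_neg at h
  have hsub : (Finset.univ : Finset A) ⊆ {p, q} := by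
    intro c _
    by_cases hc : c = p
    · simp [hc]
    · simp [h c hc]
  have hcard := Finset.card_le_card hsub
  have h2 : ({p, q} : Finset A).card ≤ 2 := Finset.card_insert_le _ _ |>.trans (by simp)
  rw [Finset.card_univ] at hcard
  omega

lemma step1T (hIIA : IIA F) (hNI : NonImposition F) {x y c : A}
    (hxy : x ≠ y) (hcx : c ≠ x) (h : Pos F x y (fun _ => True)) :
    Pos F x c (fun _ => True) := by
  by_cases hcy : c = y
  · subst hcy; exact h
  · obtain ⟨T, hT⟩ := exists_nneg hIIA hNI (show y ≠ c from fun hh => hcy hh.symm)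
    have h2 := rule1 hIIA hxy (show y ≠ c from fun hh => hcy hh.symm) hcx.symm h hT
    exact (pos_congr hIIA hcx.symm (fun i => by simp)).mp h2

lemma step2T (hIIA : IIA F) (hNI : NonImposition F) {x y c : A}
    (hxy : x ≠ y) (hcy : c ≠ y) (h : Pos F x y (fun _ => True)) :
    Pos F c y (fun _ => True) := by
  by_cases hcx : c = x
  · subst hcx; exact h
  · obtain ⟨T, hT⟩ := exists_nneg hIIA hNI hcx
    have h2 := rule2 hIIA hcx hxy hcy hT h
    exact (pos_congr hIIA hcy (fun i => by simp)).mp h2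

lemma topAll [Fintype A] (hA : 3 ≤ Fintype.card A) (hIIA : IIA F) (hNI : NonImposition F)
    {x y : A} (hxy : x ≠ y) (h : Pos F x y (fun _ => True)) :
    ∀ u v : A, u ≠ v → Pos F u v (fun _ => True) := by
  intro u v huv
  by_cases hux : u = x
  · subst hux; exact step1T hIIA hNI hxy huv.symm h
  · by_cases huy : u = y
    · subst huy
      obtain ⟨c, hcx, hcu⟩ := exists_third hA x u
      have h1 := step1T hIIA hNI hxy hcx h
      have h2 := step2T hIIA hNI (fun hh => hcx hh.symm) (fun hh => hcu hh.symm) h1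
      exact step1T hIIA hNI (fun hh => hcu hh.symm) huv.symm h2
    · have h2 : Pos F u y (fun _ => True) := step2T hIIA hNI hxy huy h
      exact step1T hIIA hNI huy huv.symm h2

lemma step1B (hIIA : IIA F) (hNI : NonImposition F) {x y c : A}
    (hxy : x ≠ y) (hcx : c ≠ x) (h : Pos F x y (fun _ => False)) :
    Pos F x c (fun _ => False) := by
  by_cases hcy : c = y
  · subst hcy; exact h
  · obtain ⟨T, hT⟩ := exists_nneg hIIA hNI (show y ≠ c from fun hh => hcy hh.symm)
    have h2 := rule3 hIIA hxy (show y ≠ c from fun hh => hcy hh.symm) hcx.symm h hT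
    exact (pos_congr hIIA hcx.symm (fun i => by simp)).mp h2

lemma step2B (hIIA : IIA F) (hNI : NonImposition F) {x y c : A}
    (hxy : x ≠ y) (hcy : c ≠ y) (h : Pos F x y (fun _ => False)) :
    Pos F c y (fun _ => False) := by
  by_cases hcx : c = x
  · subst hcx; exact h
  · obtain ⟨T, hT⟩ := exists_nneg hIIA hNI hcx
    have h2 := rule4 hIIA hcx hxy hcy hT h
    exact (pos_congr hIIA hcy (fun i => by simp)).mp h2

lemma botAll [Fintype A] (hA : 3 ≤ Fintype.card A) (hIIA : IIA F) (hNI : NonImposition F)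
    {x y : A} (hxy : x ≠ y) (h : Pos F x y (fun _ => False)) :
    ∀ u v : A, u ≠ v → Pos F u v (fun _ => False) := by
  intro u v huv
  by_cases hux : u = x
  · subst hux; exact step1B hIIA hNI hxy huv.symm h
  · by_cases huy : u = y
    · subst huy
      obtain ⟨c, hcx, hcu⟩ := exists_third hA x u
      have h1 := step1B hIIA hNI hxy hcx h
      have h2 := step2B hIIA hNI (fun hh => hcx hh.symm) (fun hh => hcu hh.symm) h1
      exact step1B hIIA hNI (fun hh => hcu hh.symm) huv.symm h2
    · have h2 : Pos F u y (fun _ => False) := step2B hIIA hNI hxy huy h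
      exact step1B hIIA hNI huy huv.symm h2

end spread

/-- An IIA and non-imposed social welfare function is null, weakly Paretian, or
inversely weakly Paretian. -/
theorem null_or_pareto_or_inverse {A : Type*} [Fintype A] (hA : 3 ≤ Fintype.card A)
    {n : ℕ} (F : (Fin n → Pref A) → WeakOrd A)
    (hIIA : IIA F) (hNI : NonImposition F) :
    NullRule F ∨ WeakPareto F ∨ InverseWeakPareto F := by

  rcases Nat.eq_zero_or_pos n with hn | hn
  · left
    intro P a b
    have huniq : ∀ P' : Fin n → Pref A, P' = P := fun P' => funext fun i => by
      exact absurd i.2 (by omega)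
    obtain ⟨P1, h1⟩ := hNI a b
    obtain ⟨P2, h2⟩ := hNI b a
    rw [huniq P1] at h1; rw [huniq P2] at h2
    exact ⟨h1, h2⟩
  · by_cases hnull : NullRule F
    · exact Or.inl hnull
    right
    have hex : ∃ (p q : A) (S : Fin n → Prop), p ≠ q ∧ Pos F p q S := by
      unfold NullRule at hnull
      push_neg at hnull
      obtain ⟨P, a, b, hP⟩ := hnull
      have hab : a ≠ b := by
        rintro rfl
        exact hP ((F P).2.1 a) ((F P).2.1 a)
      rcases (F P).2.2.2 a b with h1 | h1
      · refine ⟨a, b, fun i => (P i).1 a b, hab, ?_⟩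
        exact (pos_iff hIIA hab (fun i => Iff.rfl)).mp ⟨h1, hP h1⟩
      · refine ⟨b, a, fun i => (P i).1 b a, hab.symm, ?_⟩
        exact (pos_iff hIIA hab.symm (fun i => Iff.rfl)).mp ⟨h1, fun h2 => hP h2 h1⟩
    obtain ⟨p, q, S, hpq, hS⟩ := hex
    obtain ⟨c, hcp, hcq⟩ := exists_third hA p q
    have hqc : q ≠ c := fun hh => hcq hh.symm
    have hpc : p ≠ c := fun hh => hcp hh.symm
    by_cases hq : Nneg F q c (fun _ => True)
    · left
      have h2 := rule1 hIIA hpq hqc hpc hS hq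
      have htop : Pos F p c (fun _ => True) :=
        (pos_congr hIIA hpc (fun i => by simp)).mp h2
      have hall := topAll hA hIIA hNI hpc htop
      intro P a b hPab
      have hab : a ≠ b := by
        rintro rfl
        exact absurd (hPab ⟨0, hn⟩) (pref_asymm (P ⟨0, hn⟩) (hPab ⟨0, hn⟩))
      exact (pos_iff hIIA hab (fun i => iff_true_intro (hPab i))).mpr (hall a b hab)
    · right
      have hq' : ¬ Nneg F q c (fun _ => ¬ False) := fun hh =>
        hq ((nneg_congr hIIA hqc (fun i => by simp)).mp hh)
      have hbot : Pos F c q (fun _ => False) := pos_of_not_nneg hIIA hcq hq'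
      have hall := botAll hA hIIA hNI hcq hbot
      intro P a b hPab
      have hab : a ≠ b := by
        rintro rfl
        exact absurd (hPab ⟨0, hn⟩) (pref_asymm (P ⟨0, hn⟩) (hPab ⟨0, hn⟩))
      exact (pos_iff hIIA hab.symm
        (fun i => iff_false_intro (pref_asymm _ (hPab i)))).mpr (hall b a hab.symm)
end
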